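/- Let $\bar u_1, \bar u_2 : [0,1] \to \mathbb{R}$ be continuous, let $\bar U \in \mathbb{R}$, and for $i = 1,2$ let $V_i : [0,1] \to \mathbb{R}$ be continuously differentiable with $V_i'(x) = -f^v(\bar u_i(x), V_i(x), x)/\lambda^v(x)$ on $[0,1]$ and $V_i(1) = \bar U$. Then for every $a \in [0,1]$, $\Big| \int_0^{a} \frac{f^v(\bar u_1(x), V_1(x), x) - f^v(\bar u_2(x), V_2(x), x)}{\lambda^v(x)}\, dx \Big| \le l_F\, k_{\Lambda^{-1}} (1 + c_3)\, \sup_{x \in [0,1]} |\bar u_1(x) - \bar u_2(x)|$, where $c_3 = l_F\, k_{\Lambda^{-1}}\, e^{l_F k_{\Lambda^{-1}}}$. -/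

import Mathlib

/-- Bound on the integral `I₁` in the proof of Theorem 2. -/
theorem stmt_11
    (lF kinv : ℝ) (hlF : 0 ≤ lF) (hkinv : 0 < kinv)
    (lamv : ℝ → ℝ) (hlamc : ContinuousOn lamv (Set.Icc 0 1))
    (hlam : ∀ x ∈ Set.Icc (0:ℝ) 1, 1 / kinv ≤ lamv x)
    (fv : ℝ → ℝ → ℝ → ℝ)
    (hfc : ContinuousOn (fun p : ℝ × ℝ × ℝ => fv p.1 p.2.1 p.2.2)
      (Set.univ ×ˢ Set.univ ×ˢ Set.Icc 0 1))
    (hfl : ∀ u₁ u₂ v₁ v₂ : ℝ, ∀ x ∈ Set.Icc (0:ℝ) 1,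
      |fv u₁ v₁ x - fv u₂ v₂ x| ≤ lF * (|u₁ - u₂| + |v₁ - v₂|))
    (ubar₁ ubar₂ : ℝ → ℝ)
    (hub₁ : ContinuousOn ubar₁ (Set.Icc 0 1)) (hub₂ : ContinuousOn ubar₂ (Set.Icc 0 1))
    (Ubar : ℝ) (V₁ V₂ : ℝ → ℝ)
    (hV₁ : (∀ x ∈ Set.Icc (0:ℝ) 1,
      HasDerivWithinAt V₁ (-(fv (ubar₁ x) (V₁ x) x) / lamv x) (Set.Icc 0 1) x))
    (hV₂ : (∀ x ∈ Set.Icc (0:ℝ) 1,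
      HasDerivWithinAt V₂ (-(fv (ubar₂ x) (V₂ x) x) / lamv x) (Set.Icc 0 1) x))
    (hV₁1 : V₁ 1 = Ubar) (hV₂1 : V₂ 1 = Ubar) :
    ∀ a ∈ Set.Icc (0:ℝ) 1,
      |∫ x in (0:ℝ)..a,
          (fv (ubar₁ x) (V₁ x) x - fv (ubar₂ x) (V₂ x) x) / lamv x|
        ≤ lF * kinv * (1 + lF * kinv * Real.exp (lF * kinv)) *
          sSup ((fun y => |ubar₁ y - ubar₂ y|) '' Set.Icc (0:ℝ) 1) := by
  set M := sSup ((fun y => |ubar₁ y - ubar₂ y|) '' Set.Icc (0:ℝ) 1) with hMdef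
  have hcont : ContinuousOn (fun y => |ubar₁ y - ubar₂ y|) (Set.Icc (0:ℝ) 1) :=
    (hub₁.sub hub₂).abs
  have hbdd : BddAbove ((fun y => |ubar₁ y - ubar₂ y|) '' Set.Icc (0:ℝ) 1) :=
    (isCompact_Icc.image_of_continuousOn hcont).bddAbove
  have hM : ∀ x ∈ Set.Icc (0:ℝ) 1, |ubar₁ x - ubar₂ x| ≤ M := fun x hx =>
    le_csSup hbdd ⟨x, hx, rfl⟩
  have hM0 : 0 ≤ M := le_trans (abs_nonneg _) (hM 0 (by norm_num))
  set K := lF * kinv with hKdef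
  have hK0 : 0 ≤ K := by positivity
  have hlampos : ∀ x ∈ Set.Icc (0:ℝ) 1, 0 < lamv x := fun x hx =>
    lt_of_lt_of_le (by positivity) (hlam x hx)
  -- the difference in the right-hand sides, and its key pointwise bound
  set D : ℝ → ℝ := fun x => (fv (ubar₁ x) (V₁ x) x - fv (ubar₂ x) (V₂ x) x) / lamv x with hDdef
  set g : ℝ → ℝ := fun x => V₁ x - V₂ x with hgdef
  have hDbound : ∀ x ∈ Set.Icc (0:ℝ) 1, |D x| ≤ K * |g x| + K * M := by
    intro x hx
    have hlp := hlampos x hx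
    have hl := hfl (ubar₁ x) (ubar₂ x) (V₁ x) (V₂ x) x hx
    have hone : 1 ≤ lamv x * kinv := (div_le_iff₀ hkinv).mp (hlam x hx)
    have h1 : |D x| = |fv (ubar₁ x) (V₁ x) x - fv (ubar₂ x) (V₂ x) x| / lamv x := by
      rw [hDdef]; rw [abs_div, abs_of_pos hlp]
    have h2 : |fv (ubar₁ x) (V₁ x) x - fv (ubar₂ x) (V₂ x) x| / lamv x
        ≤ kinv * |fv (ubar₁ x) (V₁ x) x - fv (ubar₂ x) (V₂ x) x| := by
      rw [div_le_iff₀ hlp]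
      nlinarith [abs_nonneg (fv (ubar₁ x) (V₁ x) x - fv (ubar₂ x) (V₂ x) x)]
    have h3 : kinv * |fv (ubar₁ x) (V₁ x) x - fv (ubar₂ x) (V₂ x) x|
        ≤ kinv * (lF * (|ubar₁ x - ubar₂ x| + |V₁ x - V₂ x|)) :=
      mul_le_mul_of_nonneg_left hl hkinv.le
    have h4 := hM x hx
    have hgabs : |g x| = |V₁ x - V₂ x| := rfl
    rw [h1]
    calc _ ≤ kinv * (lF * (|ubar₁ x - ubar₂ x| + |V₁ x - V₂ x|)) := le_trans h2 h3
      _ ≤ K * |g x| + K * M := by rw [hgabs, hKdef]; nlinarith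
  have hgd : ∀ x ∈ Set.Icc (0:ℝ) 1, HasDerivWithinAt g (-D x) (Set.Icc 0 1) x := by
    intro x hx
    have := (hV₁ x hx).sub (hV₂ x hx)
    refine this.congr_deriv ?_
    rw [hDdef]; ring
  have hgc : ContinuousOn g (Set.Icc 0 1) := fun x hx => (hgd x hx).continuousWithinAt
  have hg1 : g 1 = 0 := by simp [hgdef, hV₁1, hV₂1]
  -- Grönwall backwards: bound on |g| on [0,1]
  have hVbound : ∀ x ∈ Set.Icc (0:ℝ) 1, |g x| ≤ K * Real.exp K * M := by
    set G : ℝ → ℝ := fun t => g (1 - t) with hGdef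
    have hmapIcc : Set.MapsTo (fun s : ℝ => 1 - s) (Set.Icc 0 1) (Set.Icc (0:ℝ) 1) := by
      intro s hs; simp only [Set.mem_Icc] at hs ⊢; constructor <;> linarith
    have hGc : ContinuousOn G (Set.Icc 0 1) :=
      hgc.comp (by fun_prop) hmapIcc
    have hGd : ∀ t ∈ Set.Ico (0:ℝ) 1,
        HasDerivWithinAt G (D (1 - t)) (Set.Ici t) t := by
      intro t ht
      have h1t : (1 - t) ∈ Set.Icc (0:ℝ) 1 := ⟨by linarith [ht.2], by linarith [ht.1]⟩
      have hmap : Set.MapsTo (fun s : ℝ => 1 - s) (Set.Icc t 1) (Set.Icc (0:ℝ) 1) := by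
        intro s hs; simp only [Set.mem_Icc] at hs ⊢
        constructor <;> linarith [ht.1]
      have hh : HasDerivWithinAt (fun s : ℝ => 1 - s) (-1) (Set.Icc t 1) t :=
        ((hasDerivAt_id t).const_sub 1).hasDerivWithinAt
      have hcomp := (hgd (1 - t) h1t).scomp t hh hmap
      have h2 : HasDerivWithinAt G (D (1 - t)) (Set.Icc t 1) t := by
        have heq : (-1 : ℝ) • -D (1 - t) = D (1 - t) := by simp
        rw [heq] at hcomp
        exact hcomp
      exact h2.mono_of_mem_nhdsWithin (Icc_mem_nhdsGE_of_mem ⟨le_refl t, ht.2⟩)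
    have hbound : ∀ t ∈ Set.Ico (0:ℝ) 1, ‖D (1 - t)‖ ≤ K * ‖G t‖ + K * M := by
      intro t ht
      have h1t : (1 - t) ∈ Set.Icc (0:ℝ) 1 := ⟨by linarith [ht.2], by linarith [ht.1]⟩
      simpa [Real.norm_eq_abs] using hDbound (1 - t) h1t
    have hG0 : ‖G 0‖ ≤ 0 := by simp [hGdef, hg1]
    have key := norm_le_gronwallBound_of_norm_deriv_right_le hGc hGd hG0 hbound
    intro x hx
    have hx' : (1 - x) ∈ Set.Icc (0:ℝ) 1 := ⟨by linarith [hx.2], by linarith [hx.1]⟩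
    have h := key (1 - x) hx'
    have hGx : G (1 - x) = g x := by simp [hGdef]
    rw [hGx, Real.norm_eq_abs] at h
    have hgb : gronwallBound 0 K (K * M) (1 - x - 0) ≤ K * Real.exp K * M := by
      rcases eq_or_lt_of_le hK0 with hK | hK
      · rw [← hK]
        simp [gronwallBound_K0]
      · rw [gronwallBound_of_K_ne_0 hK.ne']
        have h1 : Real.exp (K * (1 - x - 0)) ≤ Real.exp K := by
          apply Real.exp_le_exp.mpr
          nlinarith [hx.1, hx.2]
        have h3 : K * M / K = M := by field_simp
        have hprod : Real.exp (-K) * Real.exp K = 1 := by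
          rw [← Real.exp_add]; simp
        have h5 : Real.exp K - 1 ≤ K * Real.exp K := by
          nlinarith [Real.add_one_le_exp (-K), Real.exp_pos K, hprod]
        simp only [zero_mul, zero_add, h3]
        nlinarith [mul_le_mul_of_nonneg_left h1 hM0,
          mul_le_mul_of_nonneg_left h5 hM0]
    exact le_trans h hgb
  -- now the integral bound
  intro a ha
  set C := lF * kinv * (1 + lF * kinv * Real.exp (lF * kinv)) * M with hCdef
  have hC0 : 0 ≤ C := by positivity
  have hpt : ∀ x ∈ Set.uIoc (0:ℝ) a, ‖D x‖ ≤ C := by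
    intro x hx
    rw [Set.uIoc_of_le ha.1] at hx
    have hx' : x ∈ Set.Icc (0:ℝ) 1 := ⟨hx.1.le, le_trans hx.2 ha.2⟩
    have h1 := hDbound x hx'
    have h2 := hVbound x hx'
    rw [Real.norm_eq_abs, hCdef, ← hKdef]
    have h3 := mul_le_mul_of_nonneg_left h2 hK0
    calc |D x| ≤ K * |g x| + K * M := h1
      _ ≤ K * (K * Real.exp K * M) + K * M := by linarith
      _ = K * (1 + K * Real.exp K) * M := by ring
  have := intervalIntegral.norm_integral_le_of_norm_le_const hpt
  rw [Real.norm_eq_abs] at this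
  calc |∫ x in (0:ℝ)..a, D x| ≤ C * |a - 0| := this
    _ ≤ C * 1 := by
        apply mul_le_mul_of_nonneg_left ?_ hC0
        rw [abs_of_nonneg (by linarith [ha.1])]; linarith [ha.2]
    _ = C := mul_one C
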